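/- arXiv:2604.07810 — 3 statements merged into one kernel-verified Lean document; each statement's English description precedes it below -/
import Mathlib

section
/- Let n ≥ 2 and let φ: [0,1] → ℝ^n be a function of bounded variation (finite total variation in the Euclidean norm). Then φ([0,1]) has n-dimensional Lebesgue measure zero. -/
open MeasureTheory Set

set_option maxHeartbeats 1000000

theorem image_of_boundedVariation_measure_zero
    (n : ℕ) (hn : 2 ≤ n) (φ : ℝ → EuclideanSpace ℝ (Fin n))
    (hφ : BoundedVariationOn φ (Set.Icc (0 : ℝ) 1)) :
    volume (φ '' Set.Icc (0 : ℝ) 1) = 0 := by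
  classical
  set s : Set ℝ := Set.Icc (0 : ℝ) 1 with hs
  have hloc : LocallyBoundedVariationOn φ s := hφ.locallyBoundedVariationOn
  set v : ℝ → ℝ := fun t => variationOnFromTo φ s 0 t with hv
  -- key distance inequality
  have key : ∀ x ∈ s, ∀ y ∈ s, dist (φ x) (φ y) ≤ dist (v x) (v y) := by
    have main : ∀ x ∈ s, ∀ y ∈ s, x ≤ y → dist (φ x) (φ y) ≤ dist (v x) (v y) := by
      intro x hx y hy hxy
      have h1 : dist (φ x) (φ y) ≤ variationOnFromTo φ s x y := by
        rw [variationOnFromTo.eq_of_le φ s hxy, dist_edist]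
        apply ENNReal.toReal_mono (hloc x y hx hy)
        apply eVariationOn.edist_le φ
        exacts [⟨hx, le_rfl, hxy⟩, ⟨hy, hxy, le_rfl⟩]
      have h0 : (0:ℝ) ∈ s := by constructor <;> norm_num
      have h2 : v x + variationOnFromTo φ s x y = v y :=
        variationOnFromTo.add hloc h0 hx hy
      have h3 : variationOnFromTo φ s x y = v y - v x := by linarith
      rw [h3] at h1
      calc dist (φ x) (φ y) ≤ v y - v x := h1
        _ ≤ |v y - v x| := le_abs_self _
        _ = dist (v x) (v y) := by rw [Real.dist_eq, abs_sub_comm]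
    intro x hx y hy
    rcases le_total x y with h | h
    · exact main x hx y hy h
    · rw [dist_comm, dist_comm (v x)]; exact main y hy x hx h
  -- the Lipschitz reparametrization
  set g : ℝ → EuclideanSpace ℝ (Fin n) :=
    fun r => if h : r ∈ v '' s then φ h.choose else φ 0 with hg
  have hspec : ∀ r (h : r ∈ v '' s), h.choose ∈ s ∧ v h.choose = r :=
    fun r h => h.choose_spec
  have hgv : ∀ x ∈ s, g (v x) = φ x := by
    intro x hx
    have hmem : v x ∈ v '' s := ⟨x, hx, rfl⟩
    obtain ⟨hcs, hcv⟩ := hspec (v x) hmem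
    have : dist (g (v x)) (φ x) ≤ dist (v hmem.choose) (v x) := by
      simp only [hg, dif_pos hmem]
      exact key _ hcs _ hx
    rw [hcv, dist_self] at this
    exact dist_le_zero.mp this
  have himg : φ '' s = g '' (v '' s) := by
    rw [image_image]
    apply image_congr
    intro x hx
    exact (hgv x hx).symm
  have hgl : LipschitzOnWith 1 g (v '' s) := by
    rw [lipschitzOnWith_iff_dist_le_mul]
    rintro a ⟨x, hx, rfl⟩ b ⟨y, hy, rfl⟩
    rw [hgv x hx, hgv y hy, NNReal.coe_one, one_mul]
    exact key x hx y hy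
  -- Hausdorff dimension of the image is at most 1
  have hdim : dimH (φ '' s) ≤ 1 := by
    rw [himg]
    calc dimH (g '' (v '' s)) ≤ dimH (v '' s) := hgl.dimH_image_le
      _ ≤ dimH (univ : Set ℝ) := dimH_mono (subset_univ _)
      _ = 1 := Real.dimH_univ
  -- transfer to the pi space
  set e := (MeasurableEquiv.toLp 2 (Fin n → ℝ)).symm with he
  have hvol : volume (φ '' s) = volume (⇑e '' (φ '' s)) := by
    have hmap := (EuclideanSpace.volume_preserving_symm_measurableEquiv_toLp (Fin n)).map_eq
    have h1 : volume (⇑e '' (φ '' s)) = (Measure.map e volume) (⇑e '' (φ '' s)) := by rw [hmap]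
    have h2 : (Measure.map e volume) (⇑e '' (φ '' s)) = volume (⇑e ⁻¹' (⇑e '' (φ '' s))) :=
      MeasurableEquiv.map_apply e _
    have h3 : ⇑e ⁻¹' (⇑e '' (φ '' s)) = φ '' s :=
      Set.preimage_image_eq _ e.injective
    rw [h1, h2, h3]
  have hdim2 : dimH (⇑e '' (φ '' s)) ≤ 1 := by
    have hlip : LipschitzWith 1 ⇑e := by
      rw [MeasurableEquiv.coe_toLp_symm]
      exact PiLp.lipschitzWith_ofLp 2 _
    exact (hlip.dimH_image_le _).trans hdim
  rw [hvol, ← hausdorffMeasure_pi_real (ι := Fin n), Fintype.card_fin,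
    show ((n : ℕ) : ℝ) = ((n : NNReal) : ℝ) by norm_cast]
  refine hausdorffMeasure_of_dimH_lt (lt_of_le_of_lt hdim2 ?_)
  rw [← ENNReal.coe_one, ENNReal.coe_lt_coe]
  exact_mod_cast lt_of_lt_of_le one_lt_two hn
end

section
/- Let T₁, T₂ be i.i.d. Uniform(0, W) and τ₁, τ₂ be i.i.d. Exponential with mean η, independent of the birth times. The probability that the intervals [T₁, T₁+τ₁] and [T₂, T₂+τ₂] overlap equals (2/u²)(u − 1 + e^{−u}) where u = W/η. -/
open MeasureTheory ProbabilityTheory Real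

/-- The uniform probability measure on the interval `[0, W]`. -/
noncomputable def uniformOnWindow (W : ℝ) : Measure ℝ :=
  (ENNReal.ofReal W)⁻¹ • volume.restrict (Set.Icc 0 W)

lemma expMeasure_Iic' {r : ℝ} (hr : 0 < r) (a : ℝ) :
    expMeasure r (Set.Iic a) = ENNReal.ofReal (if 0 ≤ a then 1 - Real.exp (-(r*a)) else 0) := by
  rw [expMeasure, gammaMeasure, withDensity_apply _ measurableSet_Iic]
  exact lintegral_exponentialPDF_eq_antiDeriv hr a

lemma expMeasure_Ioi' {r : ℝ} (hr : 0 < r) {a : ℝ} (ha : 0 ≤ a) :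
    expMeasure r (Set.Ioi a) = ENNReal.ofReal (Real.exp (-(r*a))) := by
  have hp : IsProbabilityMeasure (expMeasure r) := isProbabilityMeasure_expMeasure hr
  have h1 := expMeasure_Iic' hr a
  rw [if_pos ha] at h1
  have h2 : Set.Ioi a = (Set.Iic a)ᶜ := by simp
  rw [h2, measure_compl measurableSet_Iic (measure_ne_top _ _), h1, measure_univ]
  have he : Real.exp (-(r*a)) ≤ 1 := Real.exp_le_one_iff.mpr (by nlinarith)
  rw [← ENNReal.ofReal_one, ← ENNReal.ofReal_sub _ (by nlinarith [Real.exp_pos (-(r*a))])]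
  ring_nf

lemma integral_exp_affine (k d a b : ℝ) (hk : k ≠ 0) :
    ∫ x in a..b, Real.exp (k*x + d) = k⁻¹ * (Real.exp (k*b+d) - Real.exp (k*a+d)) := by
  have := intervalIntegral.integral_comp_mul_add (a := a) (b := b) (fun x => Real.exp x) hk d
  rw [this, integral_exp]
  simp [smul_eq_mul]

lemma cont_abs_exp (r t1 : ℝ) : Continuous (fun t2 : ℝ => Real.exp (-(r*|t1-t2|))) := by
  fun_prop

lemma inner_int (r W t1 : ℝ) (hr : 0 < r) (h0 : 0 ≤ t1) (h1 : t1 ≤ W) :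
    ∫ t2 in (0:ℝ)..W, Real.exp (-(r*|t1-t2|))
      = r⁻¹*(2 - Real.exp (-(r*t1)) - Real.exp (-(r*(W-t1)))) := by
  have hi : ∀ a b : ℝ, IntervalIntegrable (fun t2 : ℝ => Real.exp (-(r*|t1-t2|))) volume a b :=
    fun a b => (cont_abs_exp r t1).intervalIntegrable a b
  rw [← intervalIntegral.integral_add_adjacent_intervals (a := 0) (b := t1) (c := W)
      (hi 0 t1) (hi t1 W)]
  have e1 : ∫ t2 in (0:ℝ)..t1, Real.exp (-(r*|t1-t2|))
      = ∫ t2 in (0:ℝ)..t1, Real.exp (r*t2 + (-(r*t1))) := by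
    apply intervalIntegral.integral_congr
    intro x hx
    rw [Set.uIcc_of_le h0] at hx
    show Real.exp (-(r*|t1-x|)) = Real.exp (r*x + -(r*t1))
    rw [abs_of_nonneg (by linarith [hx.2] : (0:ℝ) ≤ t1 - x)]
    congr 1; ring
  have e2 : ∫ t2 in t1..W, Real.exp (-(r*|t1-t2|))
      = ∫ t2 in t1..W, Real.exp ((-r)*t2 + (r*t1)) := by
    apply intervalIntegral.integral_congr
    intro x hx
    rw [Set.uIcc_of_le h1] at hx
    show Real.exp (-(r*|t1-x|)) = Real.exp (-r*x + r*t1)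
    rw [abs_of_nonpos (by linarith [hx.1] : t1 - x ≤ 0)]
    congr 1; ring
  rw [e1, e2, integral_exp_affine _ _ _ _ (ne_of_gt hr),
    integral_exp_affine _ _ _ _ (neg_ne_zero.mpr (ne_of_gt hr))]
  rw [show r*t1 + -(r*t1) = 0 by ring, show r*0 + -(r*t1) = -(r*t1) by ring,
    show (-r)*W + r*t1 = -(r*(W-t1)) by ring, show (-r)*t1 + r*t1 = 0 by ring, Real.exp_zero,
    inv_neg]
  ring

lemma outer_int (r W : ℝ) (hr : 0 < r) :
    ∫ x in (0:ℝ)..W, r⁻¹*(2 - Real.exp (-(r*x)) - Real.exp (-(r*(W-x))))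
      = r⁻¹ * (2*W - 2*r⁻¹*(1 - Real.exp (-(r*W)))) := by
  have c1 : Continuous fun x : ℝ => Real.exp (-(r*x)) := by fun_prop
  have c2 : Continuous fun x : ℝ => Real.exp (-(r*(W-x))) := by fun_prop
  rw [intervalIntegral.integral_const_mul]
  congr 1
  rw [intervalIntegral.integral_sub (f := fun x : ℝ => (2:ℝ) - Real.exp (-(r*x)))
      ((continuous_const.sub c1).intervalIntegrable _ _)
      (c2.intervalIntegrable _ _),
    intervalIntegral.integral_sub (continuous_const.intervalIntegrable _ _)
      (c1.intervalIntegrable _ _),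
    intervalIntegral.integral_const]
  have e1 : ∫ x in (0:ℝ)..W, Real.exp (-(r*x)) = ∫ x in (0:ℝ)..W, Real.exp ((-r)*x + 0) := by
    apply intervalIntegral.integral_congr
    intro x _
    show Real.exp (-(r*x)) = Real.exp (-r*x + 0)
    congr 1; ring
  have e2 : ∫ x in (0:ℝ)..W, Real.exp (-(r*(W-x)))
      = ∫ x in (0:ℝ)..W, Real.exp (r*x + (-(r*W))) := by
    apply intervalIntegral.integral_congr
    intro x _
    show Real.exp (-(r*(W-x))) = Real.exp (r*x + -(r*W))
    congr 1; ring
  rw [e1, e2, integral_exp_affine _ _ _ _ (ne_of_gt hr),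
    integral_exp_affine _ _ _ _ (neg_ne_zero.mpr (ne_of_gt hr))]
  rw [show r*W + -(r*W) = 0 by ring, show r*0 + -(r*W) = -(r*W) by ring,
    show (-r)*W + 0 = -(r*W) by ring, show (-r)*0 + 0 = 0 by ring, Real.exp_zero, inv_neg,
    smul_eq_mul]
  ring

lemma max_sub_add (a b : ℝ) : (max a b - a) + (max a b - b) = |a - b| := by
  rcases le_total a b with h | h
  · rw [max_eq_right h, abs_of_nonpos (by linarith)]; ring
  · rw [max_eq_left h, abs_of_nonneg (by linarith)]; ring

theorem overlap_probability_formula (W η : ℝ) (hW : 0 < W) (hη : 0 < η) :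
    (((uniformOnWindow W).prod (uniformOnWindow W)).prod
        ((expMeasure (1 / η)).prod (expMeasure (1 / η))))
      {p : (ℝ × ℝ) × (ℝ × ℝ) |
        max p.1.1 p.1.2 < min (p.1.1 + p.2.1) (p.1.2 + p.2.2)} =
    ENNReal.ofReal (2 / (W / η) ^ 2 * (W / η - 1 + Real.exp (-(W / η)))) := by
  set r : ℝ := 1/η with hr_def
  have hr : 0 < r := by positivity
  haveI : IsProbabilityMeasure (expMeasure r) := isProbabilityMeasure_expMeasure hr
  set U : Measure ℝ := uniformOnWindow W with hU
  set E : Measure ℝ := expMeasure r with hE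
  have hS : MeasurableSet {p : (ℝ × ℝ) × (ℝ × ℝ) |
      max p.1.1 p.1.2 < min (p.1.1 + p.2.1) (p.1.2 + p.2.2)} := by
    apply measurableSet_lt <;> fun_prop
  -- step 1: reduce to lintegral over (t1,t2)
  have step1 : ((U.prod U).prod (E.prod E)) {p : (ℝ × ℝ) × (ℝ × ℝ) |
      max p.1.1 p.1.2 < min (p.1.1 + p.2.1) (p.1.2 + p.2.2)}
      = ∫⁻ t, ENNReal.ofReal (Real.exp (-(r*|t.1-t.2|))) ∂(U.prod U) := by
    rw [Measure.prod_apply hS]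
    apply lintegral_congr
    intro t
    have hpre : (Prod.mk t ⁻¹' {p : (ℝ × ℝ) × (ℝ × ℝ) |
        max p.1.1 p.1.2 < min (p.1.1 + p.2.1) (p.1.2 + p.2.2)})
        = Set.Ioi (max t.1 t.2 - t.1) ×ˢ Set.Ioi (max t.1 t.2 - t.2) := by
      ext τ
      simp only [Set.mem_preimage, Set.mem_setOf_eq, Set.mem_prod, Set.mem_Ioi, lt_min_iff,
        sub_lt_iff_lt_add']
    rw [hpre, Measure.prod_prod,
      expMeasure_Ioi' hr (by simp [le_max_left] : (0:ℝ) ≤ max t.1 t.2 - t.1),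
      expMeasure_Ioi' hr (by simp [le_max_right] : (0:ℝ) ≤ max t.1 t.2 - t.2),
      ← ENNReal.ofReal_mul (Real.exp_pos _).le, ← Real.exp_add]
    congr 1
    rw [← max_sub_add t.1 t.2]
    ring
  rw [step1]
  -- step 2: iterate and unfold the uniform measures
  have hmeas : Measurable (fun t : ℝ × ℝ => ENNReal.ofReal (Real.exp (-(r*|t.1-t.2|)))) := by
    fun_prop
  haveI : SFinite U := by rw [hU]; unfold uniformOnWindow; infer_instance
  rw [MeasureTheory.lintegral_prod _ hmeas.aemeasurable]
  have hUc : (ENNReal.ofReal W)⁻¹ ≠ ⊤ := by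
    simp [ENNReal.inv_ne_top, ENNReal.ofReal_pos.mpr hW, (ENNReal.ofReal_pos.mpr hW).ne']
  have inner_eq : ∀ t1 ∈ Set.Icc (0:ℝ) W,
      (∫⁻ t2, ENNReal.ofReal (Real.exp (-(r*|t1-t2|))) ∂U)
      = (ENNReal.ofReal W)⁻¹
          * ENNReal.ofReal (r⁻¹*(2 - Real.exp (-(r*t1)) - Real.exp (-(r*(W-t1))))) := by
    intro t1 ht1
    rw [hU, uniformOnWindow, lintegral_smul_measure]
    congr 1
    rw [← ofReal_integral_eq_lintegral_ofReal
        ((cont_abs_exp r t1).integrableOn_Icc)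
        (Filter.Eventually.of_forall (fun x => (Real.exp_pos _).le))]
    congr 1
    rw [MeasureTheory.integral_Icc_eq_integral_Ioc, ← intervalIntegral.integral_of_le hW.le]
    exact inner_int r W t1 hr ht1.1 ht1.2
  calc ∫⁻ t1, ∫⁻ t2, ENNReal.ofReal (Real.exp (-(r*|t1-t2|))) ∂U ∂U
      = (ENNReal.ofReal W)⁻¹ * ∫⁻ t1 in Set.Icc 0 W,
          (ENNReal.ofReal W)⁻¹
            * ENNReal.ofReal (r⁻¹*(2 - Real.exp (-(r*t1)) - Real.exp (-(r*(W-t1))))) := by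
        rw [hU, uniformOnWindow, lintegral_smul_measure]
        congr 1
        exact setLIntegral_congr_fun measurableSet_Icc inner_eq
    _ = (ENNReal.ofReal W)⁻¹ * ((ENNReal.ofReal W)⁻¹ * ∫⁻ t1 in Set.Icc 0 W,
          ENNReal.ofReal (r⁻¹*(2 - Real.exp (-(r*t1)) - Real.exp (-(r*(W-t1)))))) := by
        rw [lintegral_const_mul' _ _ hUc]
    _ = (ENNReal.ofReal W)⁻¹ * ((ENNReal.ofReal W)⁻¹
          * ENNReal.ofReal (r⁻¹ * (2*W - 2*r⁻¹*(1 - Real.exp (-(r*W)))))) := by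
        congr 1
        congr 1
        rw [← ofReal_integral_eq_lintegral_ofReal]
        · congr 1
          rw [MeasureTheory.integral_Icc_eq_integral_Ioc, ← intervalIntegral.integral_of_le hW.le]
          exact outer_int r W hr
        · exact (by fun_prop : Continuous fun x : ℝ =>
            r⁻¹*(2 - Real.exp (-(r*x)) - Real.exp (-(r*(W-x))))).integrableOn_Icc
        · refine (ae_restrict_iff' measurableSet_Icc).mpr ?_
          apply Filter.Eventually.of_forall
          intro x hx
          have h1 : Real.exp (-(r*x)) ≤ 1 := Real.exp_le_one_iff.mpr (by nlinarith [hx.1])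
          have h2 : Real.exp (-(r*(W-x))) ≤ 1 := Real.exp_le_one_iff.mpr (by nlinarith [hx.2])
          have : (0:ℝ) ≤ r⁻¹ := by positivity
          show (0:ℝ) ≤ r⁻¹*(2 - Real.exp (-(r*x)) - Real.exp (-(r*(W-x))))
          nlinarith
    _ = ENNReal.ofReal (2 / (W / η) ^ 2 * (W / η - 1 + Real.exp (-(W / η)))) := by
        have hWinv : (ENNReal.ofReal W)⁻¹ = ENNReal.ofReal W⁻¹ :=
          (ENNReal.ofReal_inv_of_pos hW).symm
        rw [hWinv, ← ENNReal.ofReal_mul (by positivity), ← ENNReal.ofReal_mul (by positivity)]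
        congr 1
        have hrW : r * W = W / η := by rw [hr_def]; ring
        rw [hrW]
        have hrinv : r⁻¹ = η := by rw [hr_def]; simp
        rw [hrinv]
        field_simp
        ring
end

section
/- Suppose a kernel W: [0,1]² → ℝ factors as W(u,v) = ξ_G(u) · ξ_R(v) for measurable ξ_G, ξ_R: [0,1] → ℝ^d, where the pushforwards of Lebesgue measure under ξ_G and ξ_R are absolutely continuous on ℝ^d (in particular not supported on a proper linear subspace). If there is a full-measure set S_R ⊆ [0,1] such that for every v ∈ S_R the section u ↦ W(u,v) has bounded variation, then every component of ξ_G is a function of bounded variation on [0,1]. -/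
open MeasureTheory
open scoped RealInnerProductSpace

private lemma eVariationOn_add_le (f g : ℝ → ℝ) (s : Set ℝ) :
    eVariationOn (f + g) s ≤ eVariationOn f s + eVariationOn g s := by
  refine iSup_le fun p => ?_
  calc ∑ i ∈ Finset.range p.1, edist ((f + g) (p.2.1 (i + 1))) ((f + g) (p.2.1 i))
      ≤ ∑ i ∈ Finset.range p.1,
        (edist (f (p.2.1 (i + 1))) (f (p.2.1 i)) + edist (g (p.2.1 (i + 1))) (g (p.2.1 i))) := by
        refine Finset.sum_le_sum fun i _ => ?_
        exact edist_add_add_le _ _ _ _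
    _ = (∑ i ∈ Finset.range p.1, edist (f (p.2.1 (i + 1))) (f (p.2.1 i)))
        + ∑ i ∈ Finset.range p.1, edist (g (p.2.1 (i + 1))) (g (p.2.1 i)) :=
        Finset.sum_add_distrib
    _ ≤ eVariationOn f s + eVariationOn g s :=
        add_le_add (eVariationOn.sum_le (f := f) (n := p.1) p.2.2.1 p.2.2.2)
          (eVariationOn.sum_le (f := g) (n := p.1) p.2.2.1 p.2.2.2)

private lemma BoundedVariationOn.add' {f g : ℝ → ℝ} {s : Set ℝ}
    (hf : BoundedVariationOn f s) (hg : BoundedVariationOn g s) :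
    BoundedVariationOn (f + g) s := by
  have := eVariationOn_add_le f g s
  exact ne_of_lt (lt_of_le_of_lt this (by
    rw [ENNReal.add_lt_top]
    exact ⟨lt_top_iff_ne_top.2 hf, lt_top_iff_ne_top.2 hg⟩))

private lemma BoundedVariationOn.const_mul' {f : ℝ → ℝ} {s : Set ℝ} (c : ℝ)
    (hf : BoundedVariationOn f s) :
    BoundedVariationOn (fun x => c * f x) s := by
  have hL : LipschitzWith ‖c‖₊ (fun x : ℝ => c * x) := by
    apply LipschitzWith.of_dist_le_mul
    intro x y
    simp [Real.dist_eq, ← mul_sub, abs_mul]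
  exact hL.comp_boundedVariationOn hf

private lemma BoundedVariationOn.finset_sum {ι : Type*} (t : Finset ι)
    {F : ι → ℝ → ℝ} {s : Set ℝ} (h : ∀ i ∈ t, BoundedVariationOn (F i) s) :
    BoundedVariationOn (fun x => ∑ i ∈ t, F i x) s := by
  classical
  induction t using Finset.induction_on with
  | empty =>
      simp only [Finset.sum_empty]
      have : eVariationOn (fun _ : ℝ => (0 : ℝ)) s = 0 :=
        eVariationOn.constant_on (by
          rintro x ⟨a, _, rfl⟩ y ⟨b, _, rfl⟩; rfl)
      simp [BoundedVariationOn, this]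
  | insert _ _ hx ih =>
      rename_i a t'
      simp only [Finset.sum_insert hx]
      have h1 : BoundedVariationOn (F a) s := h a (Finset.mem_insert_self _ _)
      have h2 : BoundedVariationOn (fun x => ∑ i ∈ t', F i x) s :=
        ih fun i hi => h i (Finset.mem_insert_of_mem hi)
      exact h1.add' h2

/-- If a bilinear kernel `W(u,v) = ξG(u) · ξR(v)` has, for every `v` in a full-measure
set of labels, a bounded-variation section `u ↦ W(u,v)`, and the label pushforwards of
`ξG` and `ξR` are absolutely continuous on `ℝ^d`, then each component of `ξG` has
bounded variation. -/
theorem bilinear_kernel_sections_BV_implies_components_BV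
    (d : ℕ) (ξG ξR : ℝ → EuclideanSpace ℝ (Fin d))
    (hmG : Measurable ξG) (hmR : Measurable ξR)
    (hacG : Measure.map ξG (volume.restrict (Set.Icc (0 : ℝ) 1)) ≪
      (volume : Measure (EuclideanSpace ℝ (Fin d))))
    (hacR : Measure.map ξR (volume.restrict (Set.Icc (0 : ℝ) 1)) ≪
      (volume : Measure (EuclideanSpace ℝ (Fin d))))
    (SR : Set ℝ) (hSR : SR ⊆ Set.Icc (0 : ℝ) 1)
    (hfull : volume (Set.Icc (0 : ℝ) 1 \ SR) = 0)
    (hBV : ∀ v ∈ SR, BoundedVariationOn (fun u => ⟪ξG u, ξR v⟫) (Set.Icc (0 : ℝ) 1)) :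
    ∀ i : Fin d, BoundedVariationOn (fun u => ξG u i) (Set.Icc (0 : ℝ) 1) := by
  classical
  -- Step 1: the span of ξR '' SR is all of ℝ^d.
  set V : Submodule ℝ (EuclideanSpace ℝ (Fin d)) := Submodule.span ℝ (ξR '' SR) with hV
  have hVtop : V = ⊤ := by
    by_contra hne
    have hV0 : (volume : Measure (EuclideanSpace ℝ (Fin d))) (V : Set (EuclideanSpace ℝ (Fin d))) = 0 :=
      MeasureTheory.Measure.addHaar_submodule _ V hne
    set μ' := Measure.map ξR (volume.restrict (Set.Icc (0 : ℝ) 1)) with hμ'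
    have hμ'V : μ' (V : Set (EuclideanSpace ℝ (Fin d))) = 0 := hacR hV0
    have hVclosed : IsClosed (V : Set (EuclideanSpace ℝ (Fin d))) :=
      Submodule.closed_of_finiteDimensional V
    have hVm : MeasurableSet (V : Set (EuclideanSpace ℝ (Fin d))) := hVclosed.measurableSet
    have hμ'Vc : μ' ((V : Set (EuclideanSpace ℝ (Fin d)))ᶜ) = 0 := by
      rw [hμ', Measure.map_apply hmR hVm.compl]
      have hsub : ξR ⁻¹' ((V : Set (EuclideanSpace ℝ (Fin d)))ᶜ) ∩ Set.Icc (0 : ℝ) 1 ⊆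
          Set.Icc (0 : ℝ) 1 \ SR := by
        rintro x ⟨hxV, hxI⟩
        refine ⟨hxI, fun hxS => hxV ?_⟩
        exact Submodule.subset_span ⟨x, hxS, rfl⟩
      refine le_antisymm ?_ zero_le
      calc volume.restrict (Set.Icc (0 : ℝ) 1) (ξR ⁻¹' ((V : Set (EuclideanSpace ℝ (Fin d)))ᶜ))
          = volume (ξR ⁻¹' ((V : Set (EuclideanSpace ℝ (Fin d)))ᶜ) ∩ Set.Icc (0 : ℝ) 1) :=
            Measure.restrict_apply (hmR hVm.compl)
        _ ≤ volume (Set.Icc (0 : ℝ) 1 \ SR) := measure_mono hsub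
        _ = 0 := hfull
    have htot : μ' Set.univ = 1 := by
      rw [hμ', Measure.map_apply hmR MeasurableSet.univ]
      simp [Real.volume_Icc]
    have : μ' Set.univ = 0 := by
      have := measure_union_le (μ := μ') (V : Set (EuclideanSpace ℝ (Fin d)))
        ((V : Set (EuclideanSpace ℝ (Fin d)))ᶜ)
      rw [Set.union_compl_self, hμ'V, hμ'Vc] at this
      simpa using this
    rw [htot] at this
    exact one_ne_zero this
  -- Step 2: express each basis vector as a combination of ξR images.
  intro i
  have hmem : (EuclideanSpace.single i (1 : ℝ)) ∈ Submodule.span ℝ (ξR '' SR) := by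
    rw [← hV, hVtop]; trivial
  rw [Submodule.mem_span_set'] at hmem
  obtain ⟨n, c, g, hg⟩ := hmem
  -- choose preimages in SR
  have hchoice : ∀ k : Fin n, ∃ v ∈ SR, ξR v = (g k : EuclideanSpace ℝ (Fin d)) := by
    intro k
    obtain ⟨v, hv, hv'⟩ := (g k).2
    exact ⟨v, hv, hv'⟩
  choose v hvSR hvξ using hchoice
  -- Step 3: rewrite the component as a linear combination of BV sections.
  have key : ∀ u : ℝ, ξG u i = ∑ k : Fin n, c k * ⟪ξG u, ξR (v k)⟫ := by
    intro u
    have h1 : ⟪ξG u, EuclideanSpace.single i (1 : ℝ)⟫ = ξG u i := by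
      rw [EuclideanSpace.inner_single_right]
      simp
    rw [← h1, ← hg]
    rw [inner_sum]
    refine Finset.sum_congr rfl fun k _ => ?_
    rw [hvξ k, real_inner_smul_right]
  have : BoundedVariationOn (fun u => ∑ k : Fin n, c k * ⟪ξG u, ξR (v k)⟫)
      (Set.Icc (0 : ℝ) 1) := by
    refine BoundedVariationOn.finset_sum Finset.univ fun k _ => ?_
    exact BoundedVariationOn.const_mul' (c k) (hBV (v k) (hvSR k))
  have heq : (fun u => ξG u i) = fun u => ∑ k : Fin n, c k * ⟪ξG u, ξR (v k)⟫ :=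
    funext key
  rw [heq]
  exact this
end
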